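/- With s independent uniformly random permutations, the number of indices i ∈ {1,…,s} with matching min-hash values, C := #{i : min_{π_i}(Q) = min_{π_i}(Q')}, has expectation s·J, where J is the Jaccard coefficient of Q and Q'. -/

import Mathlib

open Finset


/-- The π-minimal element of a nonempty finset `Q`. -/
noncomputable def minHash {α : Type*} [Fintype α] [LinearOrder α]
    (π : Equiv.Perm α) (Q : Finset α) (hQ : Q.Nonempty) : α :=
  π.symm ((Q.image π).min' (hQ.image π))

lemma minHash_mem {α : Type*} [Fintype α] [LinearOrder α]
    (π : Equiv.Perm α) (Q : Finset α) (hQ : Q.Nonempty) : minHash π Q hQ ∈ Q := by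
  have h := Finset.min'_mem (Q.image π) (hQ.image π)
  obtain ⟨a, ha, hae⟩ := Finset.mem_image.mp h
  rw [minHash, ← hae, Equiv.symm_apply_apply]; exact ha

lemma minHash_le {α : Type*} [Fintype α] [LinearOrder α]
    (π : Equiv.Perm α) (Q : Finset α) (hQ : Q.Nonempty) {b : α} (hb : b ∈ Q) :
    π (minHash π Q hQ) ≤ π b := by
  rw [minHash, Equiv.apply_symm_apply]
  exact Finset.min'_le _ _ (Finset.mem_image_of_mem π hb)

lemma minHash_eq {α : Type*} [Fintype α] [LinearOrder α]
    (π : Equiv.Perm α) (Q : Finset α) (hQ : Q.Nonempty) {a : α} (ha : a ∈ Q)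
    (hle : ∀ b ∈ Q, π a ≤ π b) : minHash π Q hQ = a := by
  have h1 : π (minHash π Q hQ) ≤ π a := minHash_le π Q hQ ha
  have h2 : π a ≤ π (minHash π Q hQ) := hle _ (minHash_mem π Q hQ)
  exact π.injective (le_antisymm h1 h2)

lemma match_iff {α : Type*} [Fintype α] [LinearOrder α] [DecidableEq α]
    (π : Equiv.Perm α) (Q Q' : Finset α) (hQ : Q.Nonempty) (hQ' : Q'.Nonempty)
    (hU : (Q ∪ Q').Nonempty) :
    minHash π Q hQ = minHash π Q' hQ' ↔ minHash π (Q ∪ Q') hU ∈ Q ∩ Q' := by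
  constructor
  · intro h
    have hbQ : minHash π Q hQ ∈ Q := minHash_mem π Q hQ
    have hbQ' : minHash π Q hQ ∈ Q' := h ▸ minHash_mem π Q' hQ'
    have : minHash π (Q ∪ Q') hU = minHash π Q hQ := by
      apply minHash_eq π _ hU (mem_union_left _ hbQ)
      intro b hb
      rcases mem_union.mp hb with hb | hb
      · exact minHash_le π Q hQ hb
      · exact h ▸ minHash_le π Q' hQ' hb
    rw [this, mem_inter]; exact ⟨hbQ, hbQ'⟩
  · intro h
    rw [mem_inter] at h
    have h1 : minHash π Q hQ = minHash π (Q ∪ Q') hU :=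
      minHash_eq π Q hQ h.1 (fun b hb => minHash_le π (Q ∪ Q') hU (mem_union_left _ hb))
    have h2 : minHash π Q' hQ' = minHash π (Q ∪ Q') hU :=
      minHash_eq π Q' hQ' h.2 (fun b hb => minHash_le π (Q ∪ Q') hU (mem_union_right _ hb))
    rw [h1, h2]

lemma image_swap_eq {α : Type*} [DecidableEq α] {x y : α} (U : Finset α)
    (hx : x ∈ U) (hy : y ∈ U) : U.image (Equiv.swap x y) = U := by
  apply Finset.eq_of_subset_of_card_le
  · intro b hb
    obtain ⟨a, ha, rfl⟩ := mem_image.mp hb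
    rw [Equiv.swap_apply_def]
    split_ifs <;> assumption
  · rw [Finset.card_image_of_injective _ (Equiv.injective _)]

lemma minHash_swap {α : Type*} [Fintype α] [LinearOrder α] [DecidableEq α]
    (π : Equiv.Perm α) {x y : α} (U : Finset α) (hU : U.Nonempty)
    (hx : x ∈ U) (hy : y ∈ U) :
    minHash ((Equiv.swap x y).trans π) U hU = Equiv.swap x y (minHash π U hU) := by
  unfold minHash
  have himg : U.image ((Equiv.swap x y).trans π) = U.image π := by
    rw [show ⇑((Equiv.swap x y).trans π) = ⇑π ∘ ⇑(Equiv.swap x y) from rfl,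
      ← Finset.image_image, image_swap_eq U hx hy]
  simp only [Equiv.symm_trans_apply, Equiv.symm_swap]
  have hmin : ∀ (h1 : (U.image ((Equiv.swap x y).trans π)).Nonempty)
      (h2 : (U.image π).Nonempty),
      (U.image ((Equiv.swap x y).trans π)).min' h1 = (U.image π).min' h2 := by
    rw [himg]; intro h1 h2; rfl
  refine congrArg _ (congrArg _ ?_)
  convert hmin _ _ using 2
  any_goals exact hU.image _
  all_goals congr 1 <;> exact Subsingleton.elim _ _

lemma fiber_card_eq {α : Type*} [Fintype α] [LinearOrder α] [DecidableEq α]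
    (U : Finset α) (hU : U.Nonempty) {x y : α} (hx : x ∈ U) (hy : y ∈ U) :
    (univ.filter (fun π : Equiv.Perm α => minHash π U hU = x)).card
      = (univ.filter (fun π : Equiv.Perm α => minHash π U hU = y)).card := by
  apply Finset.card_bij' (fun π _ => (Equiv.swap x y).trans π)
    (fun π _ => (Equiv.swap x y).trans π)
  · intro π hπ
    rw [mem_filter] at hπ ⊢
    refine ⟨mem_univ _, ?_⟩
    rw [minHash_swap π U hU hx hy, hπ.2, Equiv.swap_apply_left]
  · intro π hπ
    rw [mem_filter] at hπ ⊢
    refine ⟨mem_univ _, ?_⟩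
    rw [minHash_swap π U hU hx hy, hπ.2, Equiv.swap_apply_right]
  · intro π _
    rw [← Equiv.trans_assoc, Equiv.swap_swap, Equiv.refl_trans]
  · intro π _
    rw [← Equiv.trans_assoc, Equiv.swap_swap, Equiv.refl_trans]

lemma key_count {α : Type*} [Fintype α] [LinearOrder α] [DecidableEq α]
    (T U : Finset α) (hU : U.Nonempty) (hT : T ⊆ U) :
    (univ.filter (fun π : Equiv.Perm α => minHash π U hU ∈ T)).card * U.card
      = T.card * Fintype.card (Equiv.Perm α) := by
  obtain ⟨x0, hx0⟩ := id hU
  set k := (univ.filter (fun π : Equiv.Perm α => minHash π U hU = x0)).card with hk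
  have hP : Fintype.card (Equiv.Perm α) = U.card * k := by
    rw [← Finset.card_univ,
      Finset.card_eq_sum_card_fiberwise (f := fun π : Equiv.Perm α => minHash π U hU)
        (t := U) (fun π _ => minHash_mem π U hU)]
    rw [Finset.sum_congr rfl (fun x hx => fiber_card_eq U hU hx hx0), Finset.sum_const,
      smul_eq_mul]
  have hN : (univ.filter (fun π : Equiv.Perm α => minHash π U hU ∈ T)).card = T.card * k := by
    rw [Finset.card_eq_sum_card_fiberwise (f := fun π : Equiv.Perm α => minHash π U hU)
        (s := univ.filter (fun π : Equiv.Perm α => minHash π U hU ∈ T))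
        (t := T) (fun π hπ => (mem_filter.mp hπ).2)]
    rw [Finset.sum_congr rfl (fun x hx => ?_), Finset.sum_const, smul_eq_mul]
    have hset : (univ.filter (fun π : Equiv.Perm α => minHash π U hU ∈ T)).filter
        (fun π => minHash π U hU = x) = univ.filter (fun π : Equiv.Perm α => minHash π U hU = x) := by
      ext π
      simp only [Finset.mem_filter, Finset.mem_univ, true_and]
      exact ⟨And.right, fun h => ⟨h ▸ hx, h⟩⟩
    rw [hset]
    exact fiber_card_eq U hU (hT hx) hx0
  rw [hN, hP]; ring


/-- With `s` independent uniformly random permutations, the expected number of indices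
`i` with matching min-hash values of `Q` and `Q'` equals `s · J`, where `J` is the
Jaccard coefficient of `Q` and `Q'`. -/
theorem expected_matching_signatures {α : Type*} [Fintype α] [LinearOrder α] [DecidableEq α]
    (s : ℕ) (Q Q' : Finset α) (hQ : Q.Nonempty) (hQ' : Q'.Nonempty) :
    (∑ π : Fin s → Equiv.Perm α,
        ((Finset.univ.filter (fun i : Fin s =>
            minHash (π i) Q hQ = minHash (π i) Q' hQ')).card : ℚ)) /
      (Fintype.card (Fin s → Equiv.Perm α) : ℚ)
      = (s : ℚ) * (((Q ∩ Q').card : ℚ) / ((Q ∪ Q').card : ℚ)) := by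
  have hU : (Q ∪ Q').Nonempty := hQ.mono Finset.subset_union_left
  set cP := Fintype.card (Equiv.Perm α) with hcP
  have hcPpos : 0 < cP := Fintype.card_pos
  set N := (univ.filter (fun π : Equiv.Perm α => minHash π (Q ∪ Q') hU ∈ Q ∩ Q')).card with hN
  have hkey := key_count (Q ∩ Q') (Q ∪ Q') hU
    (Finset.inter_subset_union)
  -- single-permutation sum
  have hsingle : (∑ σ : Equiv.Perm α,
      (if minHash σ Q hQ = minHash σ Q' hQ' then (1:ℚ) else 0)) = (N : ℚ) := by
    rw [hN]
    rw [Finset.card_filter]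
    push_cast
    apply Finset.sum_congr rfl
    intro σ _
    by_cases h : minHash σ Q hQ = minHash σ Q' hQ'
    · rw [if_pos h, if_pos ((match_iff σ Q Q' hQ hQ' hU).mp h)]
    · rw [if_neg h, if_neg (fun hc => h ((match_iff σ Q Q' hQ hQ' hU).mpr hc))]
  -- per-index sum over tuples
  have hper : ∀ i : Fin s,
      (∑ π : Fin s → Equiv.Perm α,
        (if minHash (π i) Q hQ = minHash (π i) Q' hQ' then (1:ℚ) else 0))
      = (cP : ℚ) ^ (s - 1) * (N : ℚ) := by
    intro i
    rw [← Equiv.sum_comp (Equiv.funSplitAt i (Equiv.Perm α)).symm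
      (fun π : Fin s → Equiv.Perm α =>
      (if minHash (π i) Q hQ = minHash (π i) Q' hQ' then (1:ℚ) else 0))]
    have happ : ∀ p : Equiv.Perm α × ({ j : Fin s // j ≠ i } → Equiv.Perm α),
        ((Equiv.funSplitAt i (Equiv.Perm α)).symm p) i = p.1 := by
      intro p
      simp [Equiv.funSplitAt, Equiv.piSplitAt]
    simp only [happ]
    rw [Fintype.sum_prod_type]
    have hcard : Fintype.card ({ j : Fin s // j ≠ i } → Equiv.Perm α) = cP ^ (s - 1) := by
      rw [Fintype.card_fun, Fintype.card_subtype_compl, Fintype.card_subtype_eq,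
        Fintype.card_fin]
    calc (∑ a : Equiv.Perm α, ∑ _b : { j : Fin s // j ≠ i } → Equiv.Perm α,
          (if minHash a Q hQ = minHash a Q' hQ' then (1:ℚ) else 0))
        = ∑ a : Equiv.Perm α, (cP ^ (s-1) : ℚ) *
          (if minHash a Q hQ = minHash a Q' hQ' then (1:ℚ) else 0) := by
          apply Finset.sum_congr rfl
          intro a _
          rw [Finset.sum_const, Finset.card_univ, hcard, nsmul_eq_mul]
          push_cast
          ring
      _ = (cP : ℚ) ^ (s - 1) * (N : ℚ) := by
          rw [← Finset.mul_sum, hsingle]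
  -- total sum
  have htot : (∑ π : Fin s → Equiv.Perm α,
      ((Finset.univ.filter (fun i : Fin s =>
          minHash (π i) Q hQ = minHash (π i) Q' hQ')).card : ℚ))
      = (s : ℚ) * ((cP : ℚ) ^ (s - 1) * (N : ℚ)) := by
    have : ∀ π : Fin s → Equiv.Perm α,
        ((Finset.univ.filter (fun i : Fin s =>
            minHash (π i) Q hQ = minHash (π i) Q' hQ')).card : ℚ)
        = ∑ i : Fin s, (if minHash (π i) Q hQ = minHash (π i) Q' hQ' then (1:ℚ) else 0) := by
      intro π
      rw [Finset.card_filter]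
      push_cast
      rfl
    simp only [this]
    rw [Finset.sum_comm]
    rw [Finset.sum_congr rfl (fun i _ => hper i), Finset.sum_const, nsmul_eq_mul,
      Finset.card_univ, Fintype.card_fin]
  rw [htot, Fintype.card_fun, Fintype.card_fin]
  rcases Nat.eq_zero_or_pos s with hs | hs
  · subst hs; simp
  -- now s ≥ 1
  have hUpos : (0:ℚ) < ((Q ∪ Q').card : ℚ) := by exact_mod_cast hU.card_pos
  have hcPQ : (0:ℚ) < (cP : ℚ) := by exact_mod_cast hcPpos
  have hpow : ((cP : ℚ)) ^ s = (cP : ℚ) ^ (s - 1) * (cP : ℚ) := by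
    rw [← pow_succ, Nat.sub_add_cancel hs]
  have hkeyQ : (N : ℚ) * ((Q ∪ Q').card : ℚ) = ((Q ∩ Q').card : ℚ) * (cP : ℚ) := by
    exact_mod_cast hkey
  have hpowne : ((cP : ℚ)) ^ (s - 1) ≠ 0 := pow_ne_zero _ (ne_of_gt hcPQ)
  have hfrac : (N : ℚ) / (cP : ℚ) = ((Q ∩ Q').card : ℚ) / ((Q ∪ Q').card : ℚ) := by
    rw [div_eq_div_iff (ne_of_gt hcPQ) (ne_of_gt hUpos)]
    linarith [hkeyQ]
  rw [← hcP]
  push_cast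
  rw [hpow, mul_div_assoc, mul_div_mul_left _ _ hpowne, hfrac]
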